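/- Subsession decomposes via strong subsession: η ⪯ θ if and only if η ⊑ 0 or η ⊑ θ. -/

import Mathlib

/- Values and value types: values are integers or booleans, value types are sets of values. -/
abbrev Value := ℤ ⊕ Bool
abbrev VType := Set Value

def tInt : VType := Set.range Sum.inl
def tBool : VType := Set.range Sum.inr

/-- Session types: failure, success, value input/output, channel input/output (delegation),
external choice, internal choice, parallel composition. -/
inductive SessionType : Type
  | fail
  | succ
  | inV (t : VType) (η : SessionType)
  | outV (t : VType) (η : SessionType)
  | inS (ρ : SessionType) (η : SessionType)
  | outS (ρ : SessionType) (η : SessionType)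
  | choice (η θ : SessionType)
  | ichoice (η θ : SessionType)
  | par (η θ : SessionType)

open SessionType

/-- Labels of visible transitions. -/
inductive Label : Type
  | tick
  | inV (v : Value)
  | outV (v : Value)
  | inS (ρ : SessionType)
  | outS (ρ : SessionType)

/-- Visible (labeled) transitions of session types (rules r1,r3,r4,r5,r7,r9,r11,r12
and the symmetric variants). -/
inductive Vis : SessionType → Label → SessionType → Prop
  | r1 : Vis succ Label.tick succ
  | r3 (v : Value) (η : SessionType) : Vis (outV {v} η) (Label.outV v) η
  | r4 (ρ η : SessionType) : Vis (outS ρ η) (Label.outS ρ) η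
  | r5 (ρ η : SessionType) : Vis (inS ρ η) (Label.inS ρ) η
  | r7 {v : Value} {t : VType} (η : SessionType) : v ∈ t → Vis (inV t η) (Label.inV v) η
  | r9l {η μ η'} (θ : SessionType) : Vis η μ η' → Vis (choice η θ) μ η'
  | r9r {θ μ θ'} (η : SessionType) : Vis θ μ θ' → Vis (choice η θ) μ θ'
  | r11l {η μ η'} (θ : SessionType) : Vis η μ η' → μ ≠ Label.tick → Vis (par η θ) μ (par η' θ)
  | r11r {θ μ θ'} (η : SessionType) : Vis θ μ θ' → μ ≠ Label.tick → Vis (par η θ) μ (par η θ')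
  | r12 {η η' θ θ' : SessionType} : Vis η Label.tick η' → Vis θ Label.tick θ' →
      Vis (par η θ) Label.tick (par η' θ')

/-- Internal (unlabeled) transitions of session types (rules r2,r6,r8,r10,r13,r14,r15 and
symmetric variants), parameterized by the subtyping relation `sub` used in rules r14/r15. -/
inductive Red (sub : SessionType → SessionType → Prop) : SessionType → SessionType → Prop
  | r2l (η θ : SessionType) : Red sub (ichoice η θ) η
  | r2r (η θ : SessionType) : Red sub (ichoice η θ) θ
  | r6 {v : Value} {t : VType} (η : SessionType) : v ∈ t → Red sub (outV t η) (outV {v} η)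
  | r8l {η η'} (θ : SessionType) : Red sub η η' → Red sub (choice η θ) (choice η' θ)
  | r8r {θ θ'} (η : SessionType) : Red sub θ θ' → Red sub (choice η θ) (choice η θ')
  | r10l {η η'} (θ : SessionType) : Red sub η η' → Red sub (par η θ) (par η' θ)
  | r10r {θ θ'} (η : SessionType) : Red sub θ θ' → Red sub (par η θ) (par η θ')
  | r13l {η η' θ θ' : SessionType} {v : Value} : Vis η (Label.outV v) η' →
      Vis θ (Label.inV v) θ' → Red sub (par η θ) (par η' θ')
  | r13r {η η' θ θ' : SessionType} {v : Value} : Vis η (Label.inV v) η' →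
      Vis θ (Label.outV v) θ' → Red sub (par η θ) (par η' θ')
  | r14l {η η' θ θ' ρ ρ' : SessionType} : Vis η (Label.outS ρ) η' →
      Vis θ (Label.inS ρ') θ' → sub ρ ρ' → Red sub (par η θ) (par η' θ')
  | r14r {η η' θ θ' ρ ρ' : SessionType} : Vis η (Label.inS ρ') η' →
      Vis θ (Label.outS ρ) θ' → sub ρ ρ' → Red sub (par η θ) (par η' θ')
  | r15l {η η' θ θ' ρ ρ' : SessionType} : Vis η (Label.outS ρ) η' →
      Vis θ (Label.inS ρ') θ' → ¬ sub ρ ρ' → Red sub (par η θ) fail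
  | r15r {η η' θ θ' ρ ρ' : SessionType} : Vis η (Label.inS ρ') η' →
      Vis θ (Label.outS ρ) θ' → ¬ sub ρ ρ' → Red sub (par η θ) fail

/-- Weight of a session type: nesting depth of session types occurring in channel
input/output prefixes (used to break the circularity between transitions and subsession). -/
def weight : SessionType → ℕ
  | fail => 0
  | succ => 0
  | inV _ η => weight η
  | outV _ η => weight η
  | inS ρ η => max (weight ρ + 1) (weight η)
  | outS ρ η => max (weight ρ + 1) (weight η)
  | choice η θ => max (weight η) (weight θ)
  | ichoice η θ => max (weight η) (weight θ)
  | par η θ => max (weight η) (weight θ)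

/-- Reflexive-transitive closure of internal transitions. -/
def Reds (sub : SessionType → SessionType → Prop) : SessionType → SessionType → Prop :=
  Relation.ReflTransGen (Red sub)

/-- η can weakly perform the success action ✓. -/
def CanTick (sub : SessionType → SessionType → Prop) (η : SessionType) : Prop :=
  ∃ η' η'', Reds sub η η' ∧ Vis η' Label.tick η''

/-- Completeness: every internal reduct can weakly perform ✓. -/
def CompleteP (sub : SessionType → SessionType → Prop) (η : SessionType) : Prop :=
  ∀ η', Reds sub η η' → CanTick sub η'

/-- Subsession: preservation of completeness in all parallel contexts. -/
def PreceqP (sub : SessionType → SessionType → Prop) (η θ : SessionType) : Prop :=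
  ∀ ρ, CompleteP sub (par η ρ) → CompleteP sub (par θ ρ)

/-- Stratified approximations of the subsession relation. -/
def SubW : ℕ → SessionType → SessionType → Prop
  | 0 => fun _ _ => True
  | n + 1 => PreceqP (SubW n)

/-- The (stratified) subtyping relation used in the synchronization rules r14/r15:
at weight `n` it only depends on the strata below. -/
def SubRel (ρ ρ' : SessionType) : Prop := SubW (max (weight ρ) (weight ρ') + 1) ρ ρ'

/-- η is complete. -/
def SComplete (η : SessionType) : Prop := CompleteP SubRel η

/-- The subsession relation η ⪯ θ. -/
def Preceq (η θ : SessionType) : Prop := PreceqP SubRel η θ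

/-- The equivalence ≈ induced by ⪯. -/
def SEquiv (η θ : SessionType) : Prop := Preceq η θ ∧ Preceq θ η

/-- η is viable if some parallel context completes it. -/
def Viable (η : SessionType) : Prop := ∃ ρ, SComplete (par η ρ)

/-- Strong subsession η ⊑ θ : the closure of ⪯ under external-choice contexts. -/
def SSub (η θ : SessionType) : Prop := ∀ ρ, Preceq (choice η ρ) (choice θ ρ)

/-- The equivalence ≃ induced by ⊑. -/
def SSEquiv (η θ : SessionType) : Prop := SSub η θ ∧ SSub θ η

/-- Actions (prefixes) of session types. -/
inductive Act : Type
  | inV (t : VType)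
  | outV (t : VType)
  | inS (ρ : SessionType)
  | outS (ρ : SessionType)

/-- Prefixing a session type by an action. -/
def Act.pre : Act → SessionType → SessionType
  | .inV t, η => SessionType.inV t η
  | .outV t, η => SessionType.outV t η
  | .inS ρ, η => SessionType.inS ρ η
  | .outS ρ, η => SessionType.outS ρ η

section AuxLemmas
open SessionType

variable {sub : SessionType → SessionType → Prop}

/-- Synchronization steps between two components (rules r13–r15). -/
inductive IsSync (sub : SessionType → SessionType → Prop) (a c : SessionType) :
    SessionType → Prop
  | s13l {v : Value} {a' c' : SessionType} : Vis a (Label.outV v) a' →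
      Vis c (Label.inV v) c' → IsSync sub a c (par a' c')
  | s13r {v : Value} {a' c' : SessionType} : Vis a (Label.inV v) a' →
      Vis c (Label.outV v) c' → IsSync sub a c (par a' c')
  | s14l {p p' a' c' : SessionType} : Vis a (Label.outS p) a' →
      Vis c (Label.inS p') c' → sub p p' → IsSync sub a c (par a' c')
  | s14r {p p' a' c' : SessionType} : Vis a (Label.inS p') a' →
      Vis c (Label.outS p) c' → sub p p' → IsSync sub a c (par a' c')
  | s15l {p p' a' c' : SessionType} : Vis a (Label.outS p) a' →
      Vis c (Label.inS p') c' → ¬ sub p p' → IsSync sub a c fail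
  | s15r {p p' a' c' : SessionType} : Vis a (Label.inS p') a' →
      Vis c (Label.outS p) c' → ¬ sub p p' → IsSync sub a c fail

lemma isSync_red {a c W : SessionType} (h : IsSync sub a c W) : Red sub (par a c) W := by
  cases h with
  | s13l h1 h2 => exact Red.r13l h1 h2
  | s13r h1 h2 => exact Red.r13r h1 h2
  | s14l h1 h2 h3 => exact Red.r14l h1 h2 h3
  | s14r h1 h2 h3 => exact Red.r14r h1 h2 h3
  | s15l h1 h2 h3 => exact Red.r15l h1 h2 h3
  | s15r h1 h2 h3 => exact Red.r15r h1 h2 h3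

lemma isSync_red_cl {a c W : SessionType} (y : SessionType) (h : IsSync sub a c W) :
    Red sub (par (choice a y) c) W := by
  cases h with
  | s13l h1 h2 => exact Red.r13l (Vis.r9l y h1) h2
  | s13r h1 h2 => exact Red.r13r (Vis.r9l y h1) h2
  | s14l h1 h2 h3 => exact Red.r14l (Vis.r9l y h1) h2 h3
  | s14r h1 h2 h3 => exact Red.r14r (Vis.r9l y h1) h2 h3
  | s15l h1 h2 h3 => exact Red.r15l (Vis.r9l y h1) h2 h3
  | s15r h1 h2 h3 => exact Red.r15r (Vis.r9l y h1) h2 h3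

lemma isSync_red_cr {a c W : SessionType} (y : SessionType) (h : IsSync sub a c W) :
    Red sub (par (choice y a) c) W := by
  cases h with
  | s13l h1 h2 => exact Red.r13l (Vis.r9r y h1) h2
  | s13r h1 h2 => exact Red.r13r (Vis.r9r y h1) h2
  | s14l h1 h2 h3 => exact Red.r14l (Vis.r9r y h1) h2 h3
  | s14r h1 h2 h3 => exact Red.r14r (Vis.r9r y h1) h2 h3
  | s15l h1 h2 h3 => exact Red.r15l (Vis.r9r y h1) h2 h3
  | s15r h1 h2 h3 => exact Red.r15r (Vis.r9r y h1) h2 h3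

lemma isSync_red_rl {a c W : SessionType} (d : SessionType) (h : IsSync sub a c W) :
    Red sub (par a (choice c d)) W := by
  cases h with
  | s13l h1 h2 => exact Red.r13l h1 (Vis.r9l d h2)
  | s13r h1 h2 => exact Red.r13r h1 (Vis.r9l d h2)
  | s14l h1 h2 h3 => exact Red.r14l h1 (Vis.r9l d h2) h3
  | s14r h1 h2 h3 => exact Red.r14r h1 (Vis.r9l d h2) h3
  | s15l h1 h2 h3 => exact Red.r15l h1 (Vis.r9l d h2) h3
  | s15r h1 h2 h3 => exact Red.r15r h1 (Vis.r9l d h2) h3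

lemma isSync_red_rr {a c W : SessionType} (d : SessionType) (h : IsSync sub a c W) :
    Red sub (par a (choice d c)) W := by
  cases h with
  | s13l h1 h2 => exact Red.r13l h1 (Vis.r9r d h2)
  | s13r h1 h2 => exact Red.r13r h1 (Vis.r9r d h2)
  | s14l h1 h2 h3 => exact Red.r14l h1 (Vis.r9r d h2) h3
  | s14r h1 h2 h3 => exact Red.r14r h1 (Vis.r9r d h2) h3
  | s15l h1 h2 h3 => exact Red.r15l h1 (Vis.r9r d h2) h3
  | s15r h1 h2 h3 => exact Red.r15r h1 (Vis.r9r d h2) h3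

lemma vis_fail {μ x} (h : Vis SessionType.fail μ x) : False := by cases h

lemma red_fail {x} (h : Red sub SessionType.fail x) : False := by cases h

lemma vis_choice_inv {a b μ x} (h : Vis (choice a b) μ x) : Vis a μ x ∨ Vis b μ x := by
  cases h with
  | r9l _ h => exact Or.inl h
  | r9r _ h => exact Or.inr h

lemma red_choice_inv {a b x} (h : Red sub (choice a b) x) :
    (∃ a', Red sub a a' ∧ x = choice a' b) ∨ (∃ b', Red sub b b' ∧ x = choice a b') := by
  cases h with
  | r8l _ h => exact Or.inl ⟨_, h, rfl⟩
  | r8r _ h => exact Or.inr ⟨_, h, rfl⟩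

lemma red_par_inv {a c x} (h : Red sub (par a c) x) :
    (∃ a', Red sub a a' ∧ x = par a' c) ∨ (∃ c', Red sub c c' ∧ x = par a c') ∨
      IsSync sub a c x := by
  cases h with
  | r10l _ h => exact Or.inl ⟨_, h, rfl⟩
  | r10r _ h => exact Or.inr (Or.inl ⟨_, h, rfl⟩)
  | r13l h1 h2 => exact Or.inr (Or.inr (IsSync.s13l h1 h2))
  | r13r h1 h2 => exact Or.inr (Or.inr (IsSync.s13r h1 h2))
  | r14l h1 h2 h3 => exact Or.inr (Or.inr (IsSync.s14l h1 h2 h3))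
  | r14r h1 h2 h3 => exact Or.inr (Or.inr (IsSync.s14r h1 h2 h3))
  | r15l h1 h2 h3 => exact Or.inr (Or.inr (IsSync.s15l h1 h2 h3))
  | r15r h1 h2 h3 => exact Or.inr (Or.inr (IsSync.s15r h1 h2 h3))

lemma isSync_choiceL_inv {a b c W} (h : IsSync sub (choice a b) c W) :
    IsSync sub a c W ∨ IsSync sub b c W := by
  cases h with
  | s13l h1 h2 => rcases vis_choice_inv h1 with h | h
                  · exact Or.inl (IsSync.s13l h h2)
                  · exact Or.inr (IsSync.s13l h h2)
  | s13r h1 h2 => rcases vis_choice_inv h1 with h | h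
                  · exact Or.inl (IsSync.s13r h h2)
                  · exact Or.inr (IsSync.s13r h h2)
  | s14l h1 h2 h3 => rcases vis_choice_inv h1 with h | h
                     · exact Or.inl (IsSync.s14l h h2 h3)
                     · exact Or.inr (IsSync.s14l h h2 h3)
  | s14r h1 h2 h3 => rcases vis_choice_inv h1 with h | h
                     · exact Or.inl (IsSync.s14r h h2 h3)
                     · exact Or.inr (IsSync.s14r h h2 h3)
  | s15l h1 h2 h3 => rcases vis_choice_inv h1 with h | h
                     · exact Or.inl (IsSync.s15l h h2 h3)
                     · exact Or.inr (IsSync.s15l h h2 h3)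
  | s15r h1 h2 h3 => rcases vis_choice_inv h1 with h | h
                     · exact Or.inl (IsSync.s15r h h2 h3)
                     · exact Or.inr (IsSync.s15r h h2 h3)

lemma isSync_choiceR_inv {a c d W} (h : IsSync sub a (choice c d) W) :
    IsSync sub a c W ∨ IsSync sub a d W := by
  cases h with
  | s13l h1 h2 => rcases vis_choice_inv h2 with h | h
                  · exact Or.inl (IsSync.s13l h1 h)
                  · exact Or.inr (IsSync.s13l h1 h)
  | s13r h1 h2 => rcases vis_choice_inv h2 with h | h
                  · exact Or.inl (IsSync.s13r h1 h)
                  · exact Or.inr (IsSync.s13r h1 h)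
  | s14l h1 h2 h3 => rcases vis_choice_inv h2 with h | h
                     · exact Or.inl (IsSync.s14l h1 h h3)
                     · exact Or.inr (IsSync.s14l h1 h h3)
  | s14r h1 h2 h3 => rcases vis_choice_inv h2 with h | h
                     · exact Or.inl (IsSync.s14r h1 h h3)
                     · exact Or.inr (IsSync.s14r h1 h h3)
  | s15l h1 h2 h3 => rcases vis_choice_inv h2 with h | h
                     · exact Or.inl (IsSync.s15l h1 h h3)
                     · exact Or.inr (IsSync.s15l h1 h h3)
  | s15r h1 h2 h3 => rcases vis_choice_inv h2 with h | h
                     · exact Or.inl (IsSync.s15r h1 h h3)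
                     · exact Or.inr (IsSync.s15r h1 h h3)

lemma isSync_fail_left {c W} (h : IsSync sub SessionType.fail c W) : False := by
  cases h with
  | s13l h1 _ => exact vis_fail h1
  | s13r h1 _ => exact vis_fail h1
  | s14l h1 _ _ => exact vis_fail h1
  | s14r h1 _ _ => exact vis_fail h1
  | s15l h1 _ _ => exact vis_fail h1
  | s15r h1 _ _ => exact vis_fail h1

lemma vis_par_tick {a c x} (h : Vis (par a c) Label.tick x) :
    ∃ a' c', Vis a Label.tick a' ∧ Vis c Label.tick c' ∧ x = par a' c' := by
  cases h with
  | r11l _ _ hne => exact absurd rfl hne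
  | r11r _ _ hne => exact absurd rfl hne
  | r12 h1 h2 => exact ⟨_, _, h1, h2, rfl⟩

lemma reds_fail {y} (h : Reds sub SessionType.fail y) : y = SessionType.fail := by
  induction h with
  | refl => rfl
  | tail _ hstep ih => subst ih; exact (red_fail hstep).elim

lemma reds_choice_l {a a'} (b : SessionType) (h : Reds sub a a') :
    Reds sub (choice a b) (choice a' b) :=
  Relation.ReflTransGen.lift (fun x => choice x b) (fun _ _ h => Red.r8l b h) _ _ h

lemma reds_choice_r {a a'} (b : SessionType) (h : Reds sub a a') :
    Reds sub (choice b a) (choice b a') :=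
  Relation.ReflTransGen.lift (fun x => choice b x) (fun _ _ h => Red.r8r b h) _ _ h

lemma reds_par_l {a a'} (c : SessionType) (h : Reds sub a a') :
    Reds sub (par a c) (par a' c) :=
  Relation.ReflTransGen.lift (fun x => par x c) (fun _ _ h => Red.r10l c h) _ _ h

lemma reds_par_r (a : SessionType) {c c'} (h : Reds sub c c') :
    Reds sub (par a c) (par a c') :=
  Relation.ReflTransGen.lift (fun x => par a x) (fun _ _ h => Red.r10r a h) _ _ h

lemma reds_par_par {a a' c c'} (h1 : Reds sub a a') (h2 : Reds sub c c') :
    Reds sub (par a c) (par a' c') :=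
  Relation.ReflTransGen.trans (reds_par_l c h1) (reds_par_r a' h2)

lemma complete_reds {X Z} (hC : CompleteP sub X) (h : Reds sub X Z) : CompleteP sub Z :=
  fun Z' h' => hC Z' (Relation.ReflTransGen.trans h h')

/-- Master decomposition for computations of `par x s`. -/
lemma decompPar {x s Z} (h : Reds sub (par x s) Z) :
    (∃ x' s', Z = par x' s' ∧ Reds sub x x' ∧ Reds sub s s') ∨
      (∃ x' s' W, Reds sub x x' ∧ Reds sub s s' ∧ IsSync sub x' s' W ∧ Reds sub W Z) := by
  induction h with
  | refl => exact Or.inl ⟨x, s, rfl, Relation.ReflTransGen.refl, Relation.ReflTransGen.refl⟩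
  | tail _ hstep ih =>
    rcases ih with ⟨x', s', rfl, hx, hs⟩ | ⟨x', s', W, hx, hs, hsy, hW⟩
    · rcases red_par_inv hstep with ⟨x₂, hr, rfl⟩ | ⟨s₂, hr, rfl⟩ | hsy
      · exact Or.inl ⟨x₂, s', rfl, hx.tail hr, hs⟩
      · exact Or.inl ⟨x', s₂, rfl, hx, hs.tail hr⟩
      · exact Or.inr ⟨x', s', _, hx, hs, hsy, Relation.ReflTransGen.refl⟩
    · exact Or.inr ⟨x', s', W, hx, hs, hsy, hW.tail hstep⟩

/-- Master decomposition for computations of `par (choice x b) s`. -/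
lemma decompChoiceL {x b s Z} (h : Reds sub (par (choice x b) s) Z) :
    (∃ x' b' s', Z = par (choice x' b') s' ∧ Reds sub x x' ∧ Reds sub b b' ∧ Reds sub s s') ∨
      (∃ x' s' W, Reds sub x x' ∧ Reds sub s s' ∧ IsSync sub x' s' W ∧ Reds sub W Z) ∨
      (∃ b' s' W, Reds sub b b' ∧ Reds sub s s' ∧ IsSync sub b' s' W ∧ Reds sub W Z) := by
  induction h with
  | refl => exact Or.inl ⟨x, b, s, rfl, Relation.ReflTransGen.refl,
      Relation.ReflTransGen.refl, Relation.ReflTransGen.refl⟩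
  | tail _ hstep ih =>
    rcases ih with ⟨x', b', s', rfl, hx, hb, hs⟩ |
        ⟨x', s', W, hx, hs, hsy, hW⟩ | ⟨b', s', W, hb, hs, hsy, hW⟩
    · rcases red_par_inv hstep with ⟨c₂, hr, rfl⟩ | ⟨s₂, hr, rfl⟩ | hsy
      · rcases red_choice_inv hr with ⟨x₂, hr', rfl⟩ | ⟨b₂, hr', rfl⟩
        · exact Or.inl ⟨x₂, b', s', rfl, hx.tail hr', hb, hs⟩
        · exact Or.inl ⟨x', b₂, s', rfl, hx, hb.tail hr', hs⟩
      · exact Or.inl ⟨x', b', s₂, rfl, hx, hb, hs.tail hr⟩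
      · rcases isSync_choiceL_inv hsy with h | h
        · exact Or.inr (Or.inl ⟨x', s', _, hx, hs, h, Relation.ReflTransGen.refl⟩)
        · exact Or.inr (Or.inr ⟨b', s', _, hb, hs, h, Relation.ReflTransGen.refl⟩)
    · exact Or.inr (Or.inl ⟨x', s', W, hx, hs, hsy, hW.tail hstep⟩)
    · exact Or.inr (Or.inr ⟨b', s', W, hb, hs, hsy, hW.tail hstep⟩)

/-- Master decomposition for computations of `par x (choice c d)`. -/
lemma decompChoiceR {x c d Z} (h : Reds sub (par x (choice c d)) Z) :
    (∃ x' c' d', Z = par x' (choice c' d') ∧ Reds sub x x' ∧ Reds sub c c' ∧ Reds sub d d') ∨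
      (∃ x' c' W, Reds sub x x' ∧ Reds sub c c' ∧ IsSync sub x' c' W ∧ Reds sub W Z) ∨
      (∃ x' d' W, Reds sub x x' ∧ Reds sub d d' ∧ IsSync sub x' d' W ∧ Reds sub W Z) := by
  induction h with
  | refl => exact Or.inl ⟨x, c, d, rfl, Relation.ReflTransGen.refl,
      Relation.ReflTransGen.refl, Relation.ReflTransGen.refl⟩
  | tail _ hstep ih =>
    rcases ih with ⟨x', c', d', rfl, hx, hc, hd⟩ |
        ⟨x', c', W, hx, hc, hsy, hW⟩ | ⟨x', d', W, hx, hd, hsy, hW⟩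
    · rcases red_par_inv hstep with ⟨x₂, hr, rfl⟩ | ⟨c₂, hr, rfl⟩ | hsy
      · exact Or.inl ⟨x₂, c', d', rfl, hx.tail hr, hc, hd⟩
      · rcases red_choice_inv hr with ⟨c₂, hr', rfl⟩ | ⟨d₂, hr', rfl⟩
        · exact Or.inl ⟨x', c₂, d', rfl, hx, hc.tail hr', hd⟩
        · exact Or.inl ⟨x', c', d₂, rfl, hx, hc, hd.tail hr'⟩
      · rcases isSync_choiceR_inv hsy with h | h
        · exact Or.inr (Or.inl ⟨x', c', _, hx, hc, h, Relation.ReflTransGen.refl⟩)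
        · exact Or.inr (Or.inr ⟨x', d', _, hx, hd, h, Relation.ReflTransGen.refl⟩)
    · exact Or.inr (Or.inl ⟨x', c', W, hx, hc, hsy, hW.tail hstep⟩)
    · exact Or.inr (Or.inr ⟨x', d', W, hx, hd, hsy, hW.tail hstep⟩)

end AuxLemmas

section MainLemmas
open SessionType

variable {sub : SessionType → SessionType → Prop}

/-- Tick paths of the fail-guarded system lift to any left branch. -/
lemma tick_lift_fail {b s x : SessionType} (h : CanTick sub (par (choice SessionType.fail b) s)) :
    CanTick sub (par (choice x b) s) := by
  obtain ⟨Z, Z', hp, ht⟩ := h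
  rcases decompChoiceL hp with ⟨f', b', s', rfl, hf, hb, hs⟩ |
      ⟨f', s', W, hf, hs, hsy, hW⟩ | ⟨b', s', W, hb, hs, hsy, hW⟩
  · obtain rfl := reds_fail hf
    obtain ⟨u, w, hu, hw, rfl⟩ := vis_par_tick ht
    rcases vis_choice_inv hu with h | h
    · exact (vis_fail h).elim
    · exact ⟨par (choice x b') s', par u w,
        Relation.ReflTransGen.trans (reds_par_l s (reds_choice_r x hb)) (reds_par_r _ hs),
        Vis.r12 (Vis.r9r x h) hw⟩
  · obtain rfl := reds_fail hf
    exact (isSync_fail_left hsy).elim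
  · exact ⟨Z, Z',
      Relation.ReflTransGen.trans
        (Relation.ReflTransGen.tail
          (Relation.ReflTransGen.trans (reds_par_l s (reds_choice_r x hb)) (reds_par_r _ hs))
          (isSync_red_cr x hsy)) hW, ht⟩

/-- Tick paths of `par y s` lift into a left choice context. -/
lemma tick_lift_choiceL {y s : SessionType} (b : SessionType) (h : CanTick sub (par y s)) :
    CanTick sub (par (choice y b) s) := by
  obtain ⟨Z, Z', hp, ht⟩ := h
  rcases decompPar hp with ⟨y', s', rfl, hy, hs⟩ | ⟨y', s', W, hy, hs, hsy, hW⟩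
  · obtain ⟨u, w, hu, hw, rfl⟩ := vis_par_tick ht
    exact ⟨par (choice y' b) s', par u w,
      Relation.ReflTransGen.trans (reds_par_l s (reds_choice_l b hy)) (reds_par_r _ hs),
      Vis.r12 (Vis.r9l b hu) hw⟩
  · exact ⟨Z, Z',
      Relation.ReflTransGen.trans
        (Relation.ReflTransGen.tail
          (Relation.ReflTransGen.trans (reds_par_l s (reds_choice_l b hy)) (reds_par_r _ hs))
          (isSync_red_cl b hsy)) hW, ht⟩

/-- Tick paths of `par y c` lift into a right-hand right-choice context. -/
lemma tick_lift_choiceRr {y c : SessionType} (d : SessionType) (h : CanTick sub (par y c)) :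
    CanTick sub (par y (choice d c)) := by
  obtain ⟨Z, Z', hp, ht⟩ := h
  rcases decompPar hp with ⟨y', c', rfl, hy, hc⟩ | ⟨y', c', W, hy, hc, hsy, hW⟩
  · obtain ⟨u, w, hu, hw, rfl⟩ := vis_par_tick ht
    exact ⟨par y' (choice d c'), par u w,
      Relation.ReflTransGen.trans (reds_par_l _ hy) (reds_par_r y' (reds_choice_r d hc)),
      Vis.r12 hu (Vis.r9r d hw)⟩
  · exact ⟨Z, Z',
      Relation.ReflTransGen.trans
        (Relation.ReflTransGen.tail
          (Relation.ReflTransGen.trans (reds_par_l _ hy) (reds_par_r y' (reds_choice_r d hc)))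
          (isSync_red_rr d hsy)) hW, ht⟩

/-- Tick paths of `par (choice y fail) s` project to `par y s`. -/
lemma tick_drop_failR {y s : SessionType}
    (h : CanTick sub (par (choice y SessionType.fail) s)) : CanTick sub (par y s) := by
  obtain ⟨Z, Z', hp, ht⟩ := h
  rcases decompChoiceL hp with ⟨y', f', s', rfl, hy, hf, hs⟩ |
      ⟨y', s', W, hy, hs, hsy, hW⟩ | ⟨f', s', W, hf, hs, hsy, hW⟩
  · obtain rfl := reds_fail hf
    obtain ⟨u, w, hu, hw, rfl⟩ := vis_par_tick ht
    rcases vis_choice_inv hu with h | h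
    · exact ⟨par y' s', par u w, reds_par_par hy hs, Vis.r12 h hw⟩
    · exact (vis_fail h).elim
  · exact ⟨Z, Z',
      Relation.ReflTransGen.trans
        (Relation.ReflTransGen.tail (reds_par_par hy hs) (isSync_red hsy)) hW, ht⟩
  · obtain rfl := reds_fail hf
    exact (isSync_fail_left hsy).elim

/-- Completeness transfers into a `choice · fail` wrapper. -/
lemma complete_choiceFail_intro {x s : SessionType} (hC : CompleteP sub (par x s)) :
    CompleteP sub (par (choice x SessionType.fail) s) := by
  intro Z hZ
  rcases decompChoiceL hZ with ⟨x', f', s', rfl, hx, hf, hs⟩ |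
      ⟨x', s', W, hx, hs, hsy, hW⟩ | ⟨f', s', W, hf, hs, hsy, hW⟩
  · obtain rfl := reds_fail hf
    exact tick_lift_choiceL _ (hC _ (reds_par_par hx hs))
  · exact hC Z (Relation.ReflTransGen.trans
      (Relation.ReflTransGen.tail (reds_par_par hx hs) (isSync_red hsy)) hW)
  · obtain rfl := reds_fail hf
    exact (isSync_fail_left hsy).elim

/-- Completeness transfers out of a `choice · fail` wrapper. -/
lemma complete_choiceFail_elim {x s : SessionType}
    (hC : CompleteP sub (par (choice x SessionType.fail) s)) : CompleteP sub (par x s) := by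
  intro Z hZ
  rcases decompPar hZ with ⟨x', s', rfl, hx, hs⟩ | ⟨x', s', W, hx, hs, hsy, hW⟩
  · exact tick_drop_failR (hC _ (Relation.ReflTransGen.trans
      (reds_par_l s (reds_choice_l _ hx)) (reds_par_r _ hs)))
  · exact hC Z (Relation.ReflTransGen.trans
      (Relation.ReflTransGen.tail
        (Relation.ReflTransGen.trans (reds_par_l s (reds_choice_l _ hx)) (reds_par_r _ hs))
        (isSync_red_cl _ hsy)) hW)

/-- `choice fail fail` cannot be completed by any context. -/
lemma not_complete_choiceFailFail {s : SessionType} :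
    ¬ CompleteP sub (par (choice SessionType.fail SessionType.fail) s) := by
  intro hC
  obtain ⟨Z, Z', hp, ht⟩ := hC _ Relation.ReflTransGen.refl
  rcases decompChoiceL hp with ⟨f1, f2, s', rfl, hf1, hf2, hs⟩ |
      ⟨f1, s', W, hf1, hs, hsy, hW⟩ | ⟨f2, s', W, hf2, hs, hsy, hW⟩
  · obtain rfl := reds_fail hf1
    obtain rfl := reds_fail hf2
    obtain ⟨u, w, hu, hw, rfl⟩ := vis_par_tick ht
    rcases vis_choice_inv hu with h | h <;> exact (vis_fail h).elim
  · obtain rfl := reds_fail hf1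
    exact (isSync_fail_left hsy).elim
  · obtain rfl := reds_fail hf2
    exact (isSync_fail_left hsy).elim

/-- Key dichotomy: if `par (choice x b) s` is complete but the `fail`-substituted system
cannot tick, then `par x s` is complete on its own. -/
lemma complete_of_noFailTick {x b s : SessionType}
    (hC : CompleteP sub (par (choice x b) s))
    (hnT : ¬ CanTick sub (par (choice SessionType.fail b) s)) :
    CompleteP sub (par x s) := by
  intro Z hZ
  rcases decompPar hZ with ⟨x', s', rfl, hx, hs⟩ | ⟨x', s', W, hx, hs, hsy, hW⟩
  · -- mirror in the choice system and analyze its tick path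
    have hTY : CanTick sub (par (choice x' b) s') :=
      hC _ (Relation.ReflTransGen.trans (reds_par_l s (reds_choice_l b hx)) (reds_par_r _ hs))
    obtain ⟨Z₂, Z₃, hp, ht⟩ := hTY
    rcases decompChoiceL hp with ⟨x₂, b₂, s₂, rfl, hx₂, hb₂, hs₂⟩ |
        ⟨x₂, s₂, W, hx₂, hs₂, hsy, hW⟩ | ⟨b₂, s₂, W, hb₂, hs₂, hsy, hW⟩
    · obtain ⟨u, w, hu, hw, rfl⟩ := vis_par_tick ht
      rcases vis_choice_inv hu with h | h
      · exact ⟨par x₂ s₂, par u w, reds_par_par hx₂ hs₂, Vis.r12 h hw⟩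
      · exact (hnT ⟨par (choice SessionType.fail b₂) s₂, par u w,
          Relation.ReflTransGen.trans (reds_par_l s (reds_choice_r _ hb₂))
            (reds_par_r _ (Relation.ReflTransGen.trans hs hs₂)),
          Vis.r12 (Vis.r9r _ h) hw⟩).elim
    · exact ⟨Z₂, Z₃, Relation.ReflTransGen.trans
        (Relation.ReflTransGen.tail (reds_par_par hx₂ hs₂) (isSync_red hsy)) hW, ht⟩
    · exact (hnT ⟨Z₂, Z₃, Relation.ReflTransGen.trans
        (Relation.ReflTransGen.tail
          (Relation.ReflTransGen.trans (reds_par_l s (reds_choice_r _ hb₂))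
            (reds_par_r _ (Relation.ReflTransGen.trans hs hs₂)))
          (isSync_red_cr _ hsy)) hW, ht⟩).elim
  · exact hC Z (Relation.ReflTransGen.trans
      (Relation.ReflTransGen.tail
        (Relation.ReflTransGen.trans (reds_par_l s (reds_choice_l b hx)) (reds_par_r _ hs))
        (isSync_red_cl b hsy)) hW)

/-- Merged-test lemma: a completing context for `choice x b` and a completing context
for `x` combine into a completing choice context for `x` alone. -/
lemma complete_merged {x b s s₀ : SessionType}
    (hK0 : CompleteP sub (par (choice x b) s)) (h0 : CompleteP sub (par x s₀)) :
    CompleteP sub (par x (choice s s₀)) := by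
  intro Z hZ
  rcases decompChoiceR hZ with ⟨x', s', s₀', rfl, hx, hs, hs0⟩ |
      ⟨x', s', W, hx, hs, hsy, hW⟩ | ⟨x', s₀', W, hx, hs0, hsy, hW⟩
  · exact tick_lift_choiceRr s' (h0 _ (reds_par_par hx hs0))
  · exact hK0 Z (Relation.ReflTransGen.trans
      (Relation.ReflTransGen.tail
        (Relation.ReflTransGen.trans (reds_par_l s (reds_choice_l b hx)) (reds_par_r _ hs))
        (isSync_red_cl b hsy)) hW)
  · exact h0 Z (Relation.ReflTransGen.trans
      (Relation.ReflTransGen.tail (reds_par_par hx hs0) (isSync_red hsy)) hW)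

end MainLemmas

theorem preceq_iff_ssub (η θ : SessionType) :
    Preceq η θ ↔ (SSub η SessionType.fail ∨ SSub η θ) := by
  constructor
  · intro h
    by_cases hv : ∃ σ₀, CompleteP SubRel (par η σ₀)
    · -- η is viable: strong subsession η ⊑ θ holds
      right
      obtain ⟨σ₀, h0⟩ := hv
      intro ρ σ hK0
      have hG : CompleteP SubRel (par θ (choice σ σ₀)) := h _ (complete_merged hK0 h0)
      intro Z hZ
      rcases decompChoiceL hZ with ⟨θ', ρ', σ', rfl, hθ, hρ, hσ⟩ |
          ⟨θ', σ'', W, hθ, hσ, hsy, hW⟩ | ⟨ρ', σ'', W, hρ, hσ, hsy, hW⟩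
      · by_cases hT : CanTick SubRel (par (choice SessionType.fail ρ') σ')
        · exact tick_lift_fail hT
        · have hY : CompleteP SubRel (par (choice η ρ') σ') :=
            complete_reds hK0 (Relation.ReflTransGen.trans
              (reds_par_l σ (reds_choice_r η hρ)) (reds_par_r _ hσ))
          have hη : CompleteP SubRel (par η σ') := complete_of_noFailTick hY hT
          exact tick_lift_choiceL ρ' ((h σ' hη) _ (reds_par_l σ' hθ))
      · exact hG Z (Relation.ReflTransGen.trans
          (Relation.ReflTransGen.tail
            (Relation.ReflTransGen.trans (reds_par_l _ hθ)
              (reds_par_r θ' (reds_choice_l σ₀ hσ)))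
            (isSync_red_rl σ₀ hsy)) hW)
      · exact hK0 Z (Relation.ReflTransGen.trans
          (Relation.ReflTransGen.tail
            (Relation.ReflTransGen.trans (reds_par_l σ (reds_choice_r η hρ))
              (reds_par_r _ hσ)) (isSync_red_cr η hsy)) hW)
    · -- η is not viable: η ⊑ fail
      left
      intro ρ σ hK0
      intro Z hZ
      rcases decompChoiceL hZ with ⟨f', ρ', σ', rfl, hf, hρ, hσ⟩ |
          ⟨f', σ'', W, hf, hσ, hsy, hW⟩ | ⟨ρ', σ'', W, hρ, hσ, hsy, hW⟩
      · obtain rfl := reds_fail hf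
        by_contra hnT
        have hY : CompleteP SubRel (par (choice η ρ') σ') :=
          complete_reds hK0 (Relation.ReflTransGen.trans
            (reds_par_l σ (reds_choice_r η hρ)) (reds_par_r _ hσ))
        exact hv ⟨σ', complete_of_noFailTick hY hnT⟩
      · obtain rfl := reds_fail hf
        exact (isSync_fail_left hsy).elim
      · exact hK0 Z (Relation.ReflTransGen.trans
          (Relation.ReflTransGen.tail
            (Relation.ReflTransGen.trans (reds_par_l σ (reds_choice_r η hρ))
              (reds_par_r _ hσ)) (isSync_red_cr η hsy)) hW)
  · rintro (h | h)
    · intro c hC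
      exact (not_complete_choiceFailFail
        (h SessionType.fail c (complete_choiceFail_intro hC))).elim
    · intro c hC
      exact complete_choiceFail_elim (h SessionType.fail c (complete_choiceFail_intro hC))
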